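/- The only simple graph on 6 vertices with 6 edges whose exterior-algebra edge ideal quotient has Hilbert series (1+3t)^2 (equivalently: exactly 9 independent sets of size 2 and no independent sets of size 3) is the disjoint union of two triangles. -/

import Mathlib

/-- The disjoint union of two simple graphs. -/
def SimpleGraph.disjUnion {α β : Type*} (G : SimpleGraph α) (H : SimpleGraph β) :
    SimpleGraph (α ⊕ β) where
  Adj x y := Sum.LiftRel G.Adj H.Adj x y
  symm := ⟨fun x y h => by
    cases h with
    | inl h => exact Sum.LiftRel.inl (G.adj_symm h)
    | inr h => exact Sum.LiftRel.inr (H.adj_symm h)⟩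
  loopless := ⟨fun x h => by
    cases h with
    | inl h => exact G.irrefl h
    | inr h => exact H.irrefl h⟩

open SimpleGraph in
/-- An isomorphism of graphs induces an isomorphism of their complements. -/
def SimpleGraph.complIso {α β : Type*} {G : SimpleGraph α} {H : SimpleGraph β} (f : G ≃g H) :
    Gᶜ ≃g Hᶜ where
  toEquiv := f.toEquiv
  map_rel_iff' := by
    intro a b
    change Hᶜ.Adj (f a) (f b) ↔ _
    simp [compl_adj, f.map_adj_iff]

/-- The explicit equivalence of vertex sets used below. -/
def e63 : Fin 6 ≃ (Fin 3 ⊕ Fin 3) where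
  toFun v := match v with
    | 0 => Sum.inl 0
    | 1 => Sum.inr 0
    | 2 => Sum.inl 1
    | 3 => Sum.inr 1
    | 4 => Sum.inl 2
    | 5 => Sum.inr 2
  invFun x := match x with
    | Sum.inl 0 => 0
    | Sum.inl 1 => 2
    | Sum.inl 2 => 4
    | Sum.inr 0 => 1
    | Sum.inr 1 => 3
    | Sum.inr 2 => 5
  left_inv := by decide
  right_inv := by decide

open SimpleGraph in
/-- The complement of the Turán graph `T(6,2) = K₃,₃` is two disjoint triangles. -/
def twoTriIso :
    (turanGraph 6 2)ᶜ ≃g ((⊤ : SimpleGraph (Fin 3)).disjUnion (⊤ : SimpleGraph (Fin 3))) where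
  toEquiv := e63
  map_rel_iff' := by
    intro a b
    show (SimpleGraph.disjUnion _ _).Adj (e63 a) (e63 b) ↔ _
    fin_cases a <;> fin_cases b <;>
      simp [e63, SimpleGraph.disjUnion, compl_adj, turanGraph, Sum.liftRel_iff] <;> decide

open SimpleGraph in
/-- Any simple graph on 6 vertices with 6 edges, exactly 9 independent sets of size 2,
and no independent set of size 3 (equivalently, whose exterior edge-ideal quotient has
Hilbert series `(1+3t)²`) is isomorphic to the disjoint union of two triangles. -/
theorem stmt3 (G : SimpleGraph (Fin 6))
    (hedges : G.edgeSet.ncard = 6)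
    (h2 : ({s : Finset (Fin 6) | s.card = 2 ∧ ∀ a ∈ s, ∀ b ∈ s, ¬ G.Adj a b}).ncard = 9)
    (h3 : ¬ ∃ s : Finset (Fin 6), s.card = 3 ∧ ∀ a ∈ s, ∀ b ∈ s, ¬ G.Adj a b) :
    Nonempty (G ≃g ((⊤ : SimpleGraph (Fin 3)).disjUnion (⊤ : SimpleGraph (Fin 3)))) := by
  classical
  -- The complement of `G` is triangle-free.
  have hcf : Gᶜ.CliqueFree 3 := by
    intro t ht
    apply h3
    refine ⟨t, ht.2, ?_⟩
    intro a ha b hb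
    by_cases hab : a = b
    · subst hab; exact G.irrefl
    · exact ((G.compl_adj a b).1 (ht.1 (Finset.mem_coe.mpr ha) (Finset.mem_coe.mpr hb) hab)).2
  have h6 : G.edgeFinset.card = 6 := by
    rw [Set.ncard_eq_toFinset_card'] at hedges
    simpa [edgeFinset] using hedges
  have h15 : (⊤ : SimpleGraph (Fin 6)).edgeFinset.card = 15 := by
    rw [card_edgeFinset_top_eq_card_choose_two]; decide
  have hceq : Gᶜ = (⊤ : SimpleGraph (Fin 6)) \ G := by
    ext a b
    simp [compl_adj]
  -- The complement of `G` has 9 edges.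
  have hts : G.edgeSet ⊆ (⊤ : SimpleGraph (Fin 6)).edgeSet :=
    edgeSet_subset_edgeSet.mpr le_top
  have ht15 : (⊤ : SimpleGraph (Fin 6)).edgeSet.ncard = 15 := by
    rw [Set.ncard_eq_toFinset_card']
    simpa [edgeFinset] using h15
  have hcard : Gᶜ.edgeFinset.card = 9 := by
    have hce : Gᶜ.edgeSet = (⊤ : SimpleGraph (Fin 6)).edgeSet \ G.edgeSet := by
      rw [hceq, edgeSet_sdiff]
    have h9 : Gᶜ.edgeSet.ncard = 9 := by
      rw [hce, Set.ncard_diff hts, ht15, hedges]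
    rw [Set.ncard_eq_toFinset_card'] at h9
    simpa [edgeFinset] using h9
  -- The Turán graph `T(6,2)` has 9 edges, and hence `Gᶜ` is Turán-maximal.
  have h9t : (turanGraph 6 2).edgeFinset.card = 9 := by decide
  have htm : Gᶜ.IsTuranMaximal 2 := by
    refine ⟨hcf, ?_⟩
    intro H' _ hcf'
    have := (isTuranMaximal_turanGraph (n := 6) (by norm_num : (0:ℕ) < 2)).2 hcf'
    omega
  -- By Turán's theorem, `Gᶜ ≃g K₃,₃`, so `G` is two triangles.
  obtain ⟨f⟩ := htm.nonempty_iso_turanGraph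
  rw [Fintype.card_fin] at f
  have fc := SimpleGraph.complIso f
  rw [compl_compl] at fc
  exact ⟨twoTriIso.comp fc⟩
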